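/- arXiv:2008.07765 — 2 statements merged into one kernel-verified Lean document; each statement's English description precedes it below -/
import Mathlib

section
/- For the n=3 rational Calogero–Moser system, the 3×3 matrices L (with L_{rr} = p_r(t), L_{rs} = ik/(q_r(t)−q_s(t)) for r≠s) and M (with M_{rs} = −ik/(q_r−q_s)² for r≠s and M_{rr} = Σ_{t≠r} ik/(q_r−q_t)²) satisfy the Lax equation dL/dt = LM − ML, provided (q(t), p(t)) satisfies Hamilton's equations q̇_r = p_r, ṗ_r = Σ_{s≠r} 2k²(q_r−q_s)^{-3}. -/
open scoped BigOperators

/-- The Lax matrix `L` of the `n = 3` rational Calogero–Moser system: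
`L_{rr} = p_r`, `L_{rs} = ik/(q_r − q_s)` for `r ≠ s`. -/
noncomputable def cmLax (k : ℝ) (q p : Fin 3 → ℝ) : Matrix (Fin 3) (Fin 3) ℂ :=
  Matrix.of fun r s =>
    if r = s then (p r : ℂ) else Complex.I * (k : ℂ) / ((q r : ℂ) - (q s : ℂ))

/-- The matrix `M`: `M_{rs} = −ik/(q_r−q_s)²` for `r ≠ s`,
`M_{rr} = Σ_{t≠r} ik/(q_r−q_t)²`. -/
noncomputable def cmLaxM (k : ℝ) (q : Fin 3 → ℝ) : Matrix (Fin 3) (Fin 3) ℂ :=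
  Matrix.of fun r s =>
    if r = s then
      ∑ t ∈ Finset.univ.filter (fun t => t ≠ r),
        Complex.I * (k : ℂ) / ((q r : ℂ) - (q t : ℂ))^2
    else -(Complex.I * (k : ℂ)) / ((q r : ℂ) - (q s : ℂ))^2

lemma iprodA (k : ℝ) (X Y : ℂ) :
    Complex.I * (k:ℂ) / X * (Complex.I * (k:ℂ) / Y) = -((k:ℂ)^2) / (X*Y) := by
  rw [div_mul_div_comm]; congr 1; linear_combination (k:ℂ)^2 * Complex.I_sq

lemma iprodB (k : ℝ) (X Y : ℂ) :
    Complex.I * (k:ℂ) / X * (-(Complex.I * (k:ℂ)) / Y) = (k:ℂ)^2 / (X*Y) := by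
  rw [div_mul_div_comm]; congr 1; linear_combination -(k:ℂ)^2 * Complex.I_sq

lemma iprodC (k : ℝ) (X Y : ℂ) :
    -(Complex.I * (k:ℂ)) / X * (Complex.I * (k:ℂ) / Y) = (k:ℂ)^2 / (X*Y) := by
  rw [div_mul_div_comm]; congr 1; linear_combination -(k:ℂ)^2 * Complex.I_sq

set_option maxHeartbeats 1000000 in
lemma dlem' (k : ℝ) (u v P : ℂ) (hu : u ≠ 0) (hv : v ≠ 0) :
    P * (Complex.I * k / u^2 + Complex.I * k / v^2)
      + Complex.I * k / u * (-(Complex.I * k) / u^2)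
      + Complex.I * k / v * (-(Complex.I * k) / v^2)
    - ((Complex.I * k / u^2 + Complex.I * k / v^2) * P
      + -(Complex.I * k) / u^2 * (Complex.I * k / (-u))
      + -(Complex.I * k) / v^2 * (Complex.I * k / (-v)))
    = 2 * k^2 * (u^3)⁻¹ + 2 * k^2 * (v^3)⁻¹ := by
  simp only [mul_add, add_mul, iprodA, iprodB, iprodC]
  field_simp
  ring_nf

set_option maxHeartbeats 1000000 in
lemma odlem' (k : ℝ) (u v Pi Pj : ℂ) (hu : u ≠ 0) (hv : v ≠ 0) (huv : u - v ≠ 0) :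
    Pi * (-(Complex.I * k) / u^2)
      + Complex.I * k / u * (Complex.I * k / u^2 + Complex.I * k / (v-u)^2)
      + Complex.I * k / v * (-(Complex.I * k) / (u-v)^2)
    - ((Complex.I * k / u^2 + Complex.I * k / v^2) * (Complex.I * k / u)
      + -(Complex.I * k) / u^2 * Pj
      + -(Complex.I * k) / v^2 * (Complex.I * k / (u-v)))
    = (0 * u - Complex.I * k * (Pi - Pj)) / u^2 := by
  have hvu : v - u ≠ 0 := fun h => huv (by linear_combination -h)
  have key : (1:ℂ)/(u*(v-u)^2) + 1/(v^2*(u-v))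
      = 1/(v*(u-v)^2) + 1/(v^2*u) := by
    field_simp
    ring
  simp only [mul_add, add_mul, iprodA, iprodB, iprodC]
  linear_combination -(k:ℂ)^2 * key

set_option maxHeartbeats 1000000 in
/-- If `(q(t), p(t))` satisfies Hamilton's equations of the `n = 3` rational
Calogero–Moser system, then `L, M` satisfy the Lax equation
`dL/dt = LM − ML` (entrywise derivatives). -/
theorem cm3_lax_equation (k : ℝ) (q p : ℝ → Fin 3 → ℝ)
    (hdist : ∀ t : ℝ, ∀ r s : Fin 3, r ≠ s → q t r ≠ q t s)
    (hq : ∀ t : ℝ, ∀ r : Fin 3, HasDerivAt (fun u => q u r) (p t r) t)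
    (hp : ∀ t : ℝ, ∀ r : Fin 3, HasDerivAt (fun u => p u r)
      (∑ s ∈ Finset.univ.filter (fun s => s ≠ r),
        2 * k^2 * ((q t r - q t s)^3)⁻¹) t) :
    ∀ t : ℝ, ∀ i j : Fin 3,
      HasDerivAt (fun u => cmLax k (q u) (p u) i j)
        ((cmLax k (q t) (p t) * cmLaxM k (q t)
          - cmLaxM k (q t) * cmLax k (q t) (p t)) i j) t := by
  intro t i j
  have hne : ∀ r s : Fin 3, r ≠ s → ((q t r : ℂ) - (q t s : ℂ)) ≠ 0 := by
    intro r s h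
    exact sub_ne_zero.mpr (by exact_mod_cast hdist t r s h)
  have hQ : ∀ r s : Fin 3, HasDerivAt (fun u => ((q u r : ℂ) - (q u s : ℂ)))
      ((p t r : ℂ) - (p t s : ℂ)) t := fun r s =>
    ((hq t r).ofReal_comp).sub ((hq t s).ofReal_comp)
  have tri : ∀ m : Fin 3, m = 0 ∨ m = 1 ∨ m = 2 := by decide
  by_cases hij : i = j
  · subst hij
    have hD : HasDerivAt (fun u => cmLax k (q u) (p u) i i)
        (((∑ s ∈ Finset.univ.filter (fun s => s ≠ i),
          2 * k^2 * ((q t i - q t s)^3)⁻¹ : ℝ) : ℂ)) t := by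
      simpa [cmLax] using (hp t i).ofReal_comp
    convert hD using 1
    have h01 := hne 0 1 (by decide); have h02 := hne 0 2 (by decide)
    have h10 := hne 1 0 (by decide); have h12 := hne 1 2 (by decide)
    have h20 := hne 2 0 (by decide); have h21 := hne 2 1 (by decide)
    rcases tri i with rfl | rfl | rfl <;>
      simp only [cmLax, cmLaxM, Matrix.sub_apply, Matrix.mul_apply, Matrix.of_apply,
        Fin.sum_univ_three, Finset.sum_filter, Fin.isValue, Fin.reduceEq, Fin.reduceNe,
        reduceIte, ite_true, ite_false] <;>
      push_cast
    · linear_combination dlem' k ((q t 0 : ℂ) - q t 1) ((q t 0 : ℂ) - q t 2) (p t 0 : ℂ) h01 h02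
    · linear_combination dlem' k ((q t 1 : ℂ) - q t 0) ((q t 1 : ℂ) - q t 2) (p t 1 : ℂ) h10 h12
    · linear_combination dlem' k ((q t 2 : ℂ) - q t 0) ((q t 2 : ℂ) - q t 1) (p t 2 : ℂ) h20 h21
  · have hD : HasDerivAt (fun u => cmLax k (q u) (p u) i j)
        ((0 * ((q t i : ℂ) - q t j) - Complex.I * k * ((p t i : ℂ) - p t j))
          / ((q t i : ℂ) - q t j)^2) t := by
      have := (hasDerivAt_const t (Complex.I * (k : ℂ))).div (hQ i j) (hne i j hij)
      simpa [cmLax, hij, Pi.div_def] using this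
    convert hD using 1
    have h01 := hne 0 1 (by decide); have h02 := hne 0 2 (by decide)
    have h10 := hne 1 0 (by decide); have h12 := hne 1 2 (by decide)
    have h20 := hne 2 0 (by decide); have h21 := hne 2 1 (by decide)
    rcases tri i with rfl | rfl | rfl <;> rcases tri j with rfl | rfl | rfl <;> first
      | exact absurd rfl hij
      | (simp only [cmLax, cmLaxM, Matrix.sub_apply, Matrix.mul_apply, Matrix.of_apply,
          Fin.sum_univ_three, Finset.sum_filter, Fin.isValue, Fin.reduceEq, Fin.reduceNe,
          reduceIte, ite_true, ite_false])
    · linear_combination odlem' k ((q t 0 : ℂ) - q t 1) ((q t 0 : ℂ) - q t 2)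
        (p t 0 : ℂ) (p t 1 : ℂ) h01 h02 (fun h => h21 (by linear_combination h))
    · linear_combination odlem' k ((q t 0 : ℂ) - q t 2) ((q t 0 : ℂ) - q t 1)
        (p t 0 : ℂ) (p t 2 : ℂ) h02 h01 (fun h => h12 (by linear_combination h))
    · linear_combination odlem' k ((q t 1 : ℂ) - q t 0) ((q t 1 : ℂ) - q t 2)
        (p t 1 : ℂ) (p t 0 : ℂ) h10 h12 (fun h => h20 (by linear_combination h))
    · linear_combination odlem' k ((q t 1 : ℂ) - q t 2) ((q t 1 : ℂ) - q t 0)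
        (p t 1 : ℂ) (p t 2 : ℂ) h12 h10 (fun h => h02 (by linear_combination h))
    · linear_combination odlem' k ((q t 2 : ℂ) - q t 0) ((q t 2 : ℂ) - q t 1)
        (p t 2 : ℂ) (p t 0 : ℂ) h20 h21 (fun h => h10 (by linear_combination h))
    · linear_combination odlem' k ((q t 2 : ℂ) - q t 1) ((q t 2 : ℂ) - q t 0)
        (p t 2 : ℂ) (p t 1 : ℂ) h21 h20 (fun h => h01 (by linear_combination h))
end

section
/- The classical Dunkl operators Poisson commute: for any a, b ∈ R^n, {D^cl_a, D^cl_b} = 0, where D^cl_a(x,p) = ⟨p,a⟩ − Σ_{α∈R₊} c_α⟨α,a⟩/⟨α,x⟩·(1−σ_α) and the Poisson bracket is taken with respect to the canonical coordinates (x,p) (treating the group-algebra coefficients (1−σ_α) as constants). -/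
open scoped RealInnerProductSpace BigOperators

/-- The classical rational Dunkl operator
`D^cl_a (x,p) = ⟨p,a⟩·1 − Σ_{α∈R₊} c_α⟨α,a⟩/⟨α,x⟩ · (1−σ_α)`,
a function on phase space with values in the group algebra `A` of the
reflection group; `s α` stands for the (constant) group-algebra element
`1 − σ_α`. -/
noncomputable def classicalDunkl {n : ℕ} {A : Type*} [NormedRing A]
    [NormedAlgebra ℝ A]
    (Rp : Finset (EuclideanSpace ℝ (Fin n)))
    (c : EuclideanSpace ℝ (Fin n) → ℝ)
    (s : EuclideanSpace ℝ (Fin n) → A)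
    (a : EuclideanSpace ℝ (Fin n))
    (z : EuclideanSpace ℝ (Fin n) × EuclideanSpace ℝ (Fin n)) : A :=
  (⟪z.2, a⟫ : ℝ) • (1 : A)
    - ∑ α ∈ Rp, ((c α * ⟪α, a⟫) / ⟪α, z.1⟫) • s α

/-- Poisson bracket of `A`-valued functions on phase space `ℝⁿ × ℝⁿ`
(first component `x`, second component `p`):
`{f,g} = Σ_i (∂f/∂p_i ∂g/∂x_i − ∂f/∂x_i ∂g/∂p_i)`. -/
noncomputable def poissonA {n : ℕ} {A : Type*} [NormedRing A]
    [NormedAlgebra ℝ A]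
    (f g : EuclideanSpace ℝ (Fin n) × EuclideanSpace ℝ (Fin n) → A)
    (z : EuclideanSpace ℝ (Fin n) × EuclideanSpace ℝ (Fin n)) : A :=
  ∑ i : Fin n,
    (fderiv ℝ f z (0, EuclideanSpace.single i (1:ℝ))
        * fderiv ℝ g z (EuclideanSpace.single i (1:ℝ), 0)
      - fderiv ℝ f z (EuclideanSpace.single i (1:ℝ), 0)
        * fderiv ℝ g z (0, EuclideanSpace.single i (1:ℝ)))

lemma hasFDerivAt_classicalDunkl {n : ℕ} {A : Type*} [NormedRing A]
    [NormedAlgebra ℝ A]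
    (Rp : Finset (EuclideanSpace ℝ (Fin n)))
    (c : EuclideanSpace ℝ (Fin n) → ℝ)
    (s : EuclideanSpace ℝ (Fin n) → A)
    (a : EuclideanSpace ℝ (Fin n))
    (z : EuclideanSpace ℝ (Fin n) × EuclideanSpace ℝ (Fin n))
    (hz : ∀ α ∈ Rp, ⟪α, z.1⟫ ≠ (0:ℝ)) :
    HasFDerivAt (classicalDunkl Rp c s a)
      ((((innerSL ℝ a).comp (ContinuousLinearMap.snd ℝ _ _)).smulRight (1:A))
        - ∑ α ∈ Rp, (((c α * ⟪α, a⟫) * (-(⟪α, z.1⟫^2)⁻¹)) •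
            ((innerSL ℝ α).comp (ContinuousLinearMap.fst ℝ _ _))).smulRight (s α)) z := by
  unfold classicalDunkl
  apply HasFDerivAt.sub
  · have h1 : HasFDerivAt (fun w : EuclideanSpace ℝ (Fin n) × EuclideanSpace ℝ (Fin n) =>
        (⟪w.2, a⟫ : ℝ)) ((innerSL ℝ a).comp (ContinuousLinearMap.snd ℝ _ _)) z := by
      have := ((innerSL ℝ a).comp (ContinuousLinearMap.snd ℝ
        (EuclideanSpace ℝ (Fin n)) (EuclideanSpace ℝ (Fin n)))).hasFDerivAt (x := z)
      convert this using 1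
      funext w
      simp only [ContinuousLinearMap.coe_comp', Function.comp_apply, ContinuousLinearMap.coe_snd',
        innerSL_apply_apply, real_inner_comm]
    exact h1.smul_const (1:A)
  · apply HasFDerivAt.fun_sum
    intro α hα
    have hg : HasFDerivAt (fun w : EuclideanSpace ℝ (Fin n) × EuclideanSpace ℝ (Fin n) =>
        (⟪α, w.1⟫ : ℝ)) ((innerSL ℝ α).comp (ContinuousLinearMap.fst ℝ _ _)) z := by
      have := ((innerSL ℝ α).comp (ContinuousLinearMap.fst ℝ
        (EuclideanSpace ℝ (Fin n)) (EuclideanSpace ℝ (Fin n)))).hasFDerivAt (x := z)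
      convert this using 1
      funext w
      simp only [ContinuousLinearMap.coe_comp', Function.comp_apply, ContinuousLinearMap.coe_fst',
        innerSL_apply_apply]
    have hinv : HasDerivAt (fun t : ℝ => (c α * ⟪α, a⟫) / t)
        ((c α * ⟪α, a⟫) * (-(⟪α, z.1⟫^2)⁻¹)) ⟪α, z.1⟫ := by
      simpa [div_eq_mul_inv] using (hasDerivAt_inv (hz α hα)).const_mul (c α * ⟪α, a⟫)
    exact (hinv.comp_hasFDerivAt z hg).smul_const (s α)

/-- The classical Dunkl operators Poisson commute: `{D^cl_a, D^cl_b} = 0`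
at every point of `T*(V_reg)`. -/
theorem classicalDunkl_poisson_commute {n : ℕ} {A : Type*} [NormedRing A]
    [NormedAlgebra ℝ A]
    (Rp : Finset (EuclideanSpace ℝ (Fin n)))
    (c : EuclideanSpace ℝ (Fin n) → ℝ)
    (s : EuclideanSpace ℝ (Fin n) → A)
    (hR0 : ∀ α ∈ Rp, α ≠ 0)
    (a b : EuclideanSpace ℝ (Fin n))
    (z : EuclideanSpace ℝ (Fin n) × EuclideanSpace ℝ (Fin n))
    (hz : ∀ α ∈ Rp, ⟪α, z.1⟫ ≠ (0:ℝ)) :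
    poissonA (classicalDunkl Rp c s a) (classicalDunkl Rp c s b) z = 0 := by
  rw [poissonA,
    (hasFDerivAt_classicalDunkl Rp c s a z hz).fderiv,
    (hasFDerivAt_classicalDunkl Rp c s b z hz).fderiv]
  simp only [ContinuousLinearMap.sub_apply, ContinuousLinearMap.smulRight_apply,
    ContinuousLinearMap.coe_sum', Finset.sum_apply, ContinuousLinearMap.coe_smul',
    Pi.smul_apply, ContinuousLinearMap.coe_comp', Function.comp_apply,
    ContinuousLinearMap.coe_fst', ContinuousLinearMap.coe_snd', innerSL_apply_apply,
    inner_zero_right, mul_zero, smul_eq_mul, zero_smul, Finset.sum_const_zero, sub_zero,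
    EuclideanSpace.inner_single_right, RCLike.inner_apply, map_one, mul_one, one_mul,
    zero_mul, zero_sub, neg_smul, sub_neg_eq_add]
  simp only [conj_trivial, mul_neg, neg_mul, neg_neg, sub_neg_eq_add, neg_smul,
    Finset.mul_sum, Finset.sum_mul, smul_mul_assoc, mul_smul_comm, one_mul, mul_one,
    smul_smul, Finset.sum_neg_distrib]
  simp only [Finset.smul_sum, smul_smul]
  simp only [← Finset.sum_sub_distrib, ← sub_smul]
  rw [Finset.sum_comm]
  simp only [← Finset.sum_smul]
  apply Finset.sum_eq_zero
  intro α hα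
  convert zero_smul ℝ (s α)
  have h1 : ∀ x : EuclideanSpace ℝ (Fin n), ∑ i, α i * x i = (⟪α, x⟫ : ℝ) := by
    intro x; simp [PiLp.inner_apply, mul_comm]
  rw [Finset.sum_sub_distrib]
  have e1 : ∑ i, c α * (⟪α, b⟫:ℝ) * ((⟪α, z.1⟫:ℝ) ^ 2)⁻¹ * α i * a i
      = c α * (⟪α, b⟫:ℝ) * ((⟪α, z.1⟫:ℝ) ^ 2)⁻¹ * (⟪α, a⟫:ℝ) := by
    rw [← h1 a, Finset.mul_sum]
    exact Finset.sum_congr rfl fun i _ => by ring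
  have e2 : ∑ i, b i * (c α * (⟪α, a⟫:ℝ) * ((⟪α, z.1⟫:ℝ) ^ 2)⁻¹ * α i)
      = c α * (⟪α, a⟫:ℝ) * ((⟪α, z.1⟫:ℝ) ^ 2)⁻¹ * (⟪α, b⟫:ℝ) := by
    rw [← h1 b, Finset.mul_sum]
    exact Finset.sum_congr rfl fun i _ => by ring
  rw [e1, e2]
  ring
end
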